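/- Let k > 0, a > 0 and b ∈ ℝ. Then (Γ(2k) / (Γ(k)² · (2a)^{2k−1})) · ∫_{−a}^{a} e^{bν} (a² − ν²)^{k−1} dν = Γ(k+1/2) · Σ_{n=0}^{∞} (ab/2)^{2n} / (n! · Γ(n + k + 1/2)). (In the paper's notation this computes the Dunkl–Bessel function of type A₁ as J_{k,2}(μ,λ) = 𝒥_{k−1/2}(2μ₁λ₁).) -/

import Mathlib

open MeasureTheory Real Set

lemma betaReal {u v : ℝ} (hu : 0 < u) (hv : 0 < v) :
    ∫ x in Set.Ioo (0:ℝ) 1, x ^ (u - 1) * (1 - x) ^ (v - 1) =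
      Real.Gamma u * Real.Gamma v / Real.Gamma (u + v) := by
  have h := Complex.Gamma_mul_Gamma_eq_betaIntegral (s := u) (t := v)
    (by simpa using hu) (by simpa using hv)
  have hB : Complex.betaIntegral u v =
      ((∫ x in Set.Ioo (0:ℝ) 1, x ^ (u - 1) * (1 - x) ^ (v - 1) : ℝ) : ℂ) := by
    have h1 : Complex.betaIntegral u v =
        ∫ x in (0:ℝ)..1, ((x ^ (u - 1) * (1 - x) ^ (v - 1) : ℝ) : ℂ) := by
      refine intervalIntegral.integral_congr fun x hx => ?_
      rw [uIcc_of_le zero_le_one] at hx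
      rw [show ((u:ℂ)-1) = ((u-1:ℝ):ℂ) by push_cast; ring,
        show ((v:ℂ)-1) = ((v-1:ℝ):ℂ) by push_cast; ring,
        show ((1:ℂ) - (x:ℂ)) = ((1-x:ℝ):ℂ) by push_cast; ring,
        ← Complex.ofReal_cpow hx.1, ← Complex.ofReal_cpow (by linarith [hx.2])]
      norm_cast
    rw [h1, intervalIntegral.integral_ofReal, intervalIntegral.integral_of_le zero_le_one,
      integral_Ioc_eq_integral_Ioo]
  rw [hB, ← Complex.ofReal_add, Complex.Gamma_ofReal, Complex.Gamma_ofReal,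
    Complex.Gamma_ofReal, ← Complex.ofReal_mul, ← Complex.ofReal_mul] at h
  have h' : Real.Gamma u * Real.Gamma v =
      Real.Gamma (u + v) * ∫ x in Set.Ioo (0:ℝ) 1, x ^ (u - 1) * (1 - x) ^ (v - 1) :=
    Complex.ofReal_inj.mp h
  rw [eq_div_iff (Real.Gamma_pos_of_pos (show (0:ℝ) < u + v by positivity)).ne', h', mul_comm]

lemma gammaNatAddHalf (n : ℕ) :
    Real.Gamma ((n:ℝ) + 1/2) = Real.sqrt π * (2*n).factorial / (4^n * n.factorial) := by
  induction n with
  | zero =>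
    rw [show ((0:ℕ):ℝ) + 1/2 = 1/2 by norm_num, Real.Gamma_one_half_eq]
    simp
  | succ n ih =>
    have h1 : ((n+1 : ℕ):ℝ) + 1/2 = ((n:ℝ) + 1/2) + 1 := by push_cast; ring
    rw [h1, Real.Gamma_add_one (by positivity), ih]
    have h2 : (2 * (n+1)) = (2*n+1) + 1 := by ring
    rw [h2, Nat.factorial_succ, Nat.factorial_succ, Nat.factorial_succ]
    have h4 : (0:ℝ) < n.factorial := by positivity
    push_cast
    field_simp
    ring

lemma rpow_bound {k a : ℝ} (ha : 0 < a) {x : ℝ} (h1 : a ≤ x) (h2 : x ≤ 2*a) :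
    x ^ (k-1) ≤ a^(k-1) + (2*a)^(k-1) := by
  rcases le_or_gt 0 (k-1) with h | h
  · calc x ^ (k-1) ≤ (2*a)^(k-1) := Real.rpow_le_rpow (le_trans ha.le h1) h2 h
    _ ≤ _ := le_add_of_nonneg_left (Real.rpow_nonneg ha.le _)
  · calc x ^ (k-1) ≤ a^(k-1) := Real.rpow_le_rpow_of_nonpos ha h1 h.le
    _ ≤ _ := le_add_of_nonneg_right (Real.rpow_nonneg (by linarith) _)

lemma wMeas {k a : ℝ} : Measurable (fun ν : ℝ => (a^2 - ν^2) ^ (k-1)) := by fun_prop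

lemma wInt {k a : ℝ} (hk : 0 < k) (ha : 0 < a) :
    IntegrableOn (fun ν => (a^2 - ν^2) ^ (k-1)) (Set.Ioo (-a) a) := by
  have hM : (0:ℝ) ≤ a^(k-1) + (2*a)^(k-1) := by
    have := Real.rpow_nonneg ha.le (k-1)
    have := Real.rpow_nonneg (by linarith : (0:ℝ) ≤ 2*a) (k-1)
    linarith
  set M := a^(k-1) + (2*a)^(k-1) with hMdef
  have hright : IntegrableOn (fun ν => (a^2 - ν^2) ^ (k-1)) (Set.Ioc 0 a) := by
    have hg1 : IntegrableOn (fun ν => (a - ν) ^ (k-1)) (Set.Ioc 0 a) := by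
      have h0 : IntervalIntegrable (fun x : ℝ => x ^ (k-1)) volume 0 a :=
        intervalIntegral.intervalIntegrable_rpow' (by linarith)
      have h1 := (h0.comp_sub_left a).symm
      simp only [sub_zero, sub_self] at h1
      exact (intervalIntegrable_iff_integrableOn_Ioc_of_le ha.le).mp h1
    refine Integrable.mono' (hg1.const_mul M) wMeas.aestronglyMeasurable ?_
    filter_upwards [ae_restrict_mem measurableSet_Ioc] with ν hν
    have h1 : (0:ℝ) ≤ a - ν := by linarith [hν.2]
    have h2 : a ≤ a + ν := by linarith [hν.1]
    have h3 : a + ν ≤ 2*a := by linarith [hν.2]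
    have key : a^2 - ν^2 = (a - ν) * (a + ν) := by ring
    rw [Real.norm_eq_abs, abs_of_nonneg (Real.rpow_nonneg (by nlinarith) _), key,
      Real.mul_rpow h1 (by linarith)]
    calc (a-ν)^(k-1) * (a+ν)^(k-1) ≤ (a-ν)^(k-1) * M :=
          mul_le_mul_of_nonneg_left (rpow_bound ha h2 h3) (Real.rpow_nonneg h1 _)
      _ = M * (a-ν)^(k-1) := mul_comm _ _
  have hleft : IntegrableOn (fun ν => (a^2 - ν^2) ^ (k-1)) (Set.Ioc (-a) 0) := by
    have hg1 : IntegrableOn (fun ν => (a + ν) ^ (k-1)) (Set.Ioc (-a) 0) := by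
      have h0 : IntervalIntegrable (fun x : ℝ => x ^ (k-1)) volume 0 a :=
        intervalIntegral.intervalIntegrable_rpow' (by linarith)
      have h1 := h0.comp_add_left a
      simp only [zero_sub, sub_self] at h1
      exact (intervalIntegrable_iff_integrableOn_Ioc_of_le (by linarith)).mp h1
    refine Integrable.mono' (hg1.const_mul M) wMeas.aestronglyMeasurable ?_
    filter_upwards [ae_restrict_mem measurableSet_Ioc] with ν hν
    have h1 : (0:ℝ) ≤ a + ν := by linarith [hν.1]
    have h2 : a ≤ a - ν := by linarith [hν.2]
    have h3 : a - ν ≤ 2*a := by linarith [hν.1]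
    have key : a^2 - ν^2 = (a + ν) * (a - ν) := by ring
    rw [Real.norm_eq_abs, abs_of_nonneg (Real.rpow_nonneg (by nlinarith) _), key,
      Real.mul_rpow h1 (by linarith)]
    calc (a+ν)^(k-1) * (a-ν)^(k-1) ≤ (a+ν)^(k-1) * M :=
          mul_le_mul_of_nonneg_left (rpow_bound ha h2 h3) (Real.rpow_nonneg h1 _)
      _ = M * (a+ν)^(k-1) := mul_comm _ _
  refine (hleft.union hright).mono_set ?_
  intro ν hν
  rcases le_or_gt ν 0 with h | h
  · exact Or.inl ⟨hν.1, h⟩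
  · exact Or.inr ⟨h, hν.2.le⟩

lemma halfInt {k a : ℝ} (hk : 0 < k) (ha : 0 < a) (n : ℕ) :
    ∫ ν in Set.Ioo 0 a, ν^(2*n) * (a^2 - ν^2)^(k-1)
      = a^(2*n) * a^(2*k-1) / 2 *
        (Real.Gamma ((n:ℝ)+1/2) * Real.Gamma k / Real.Gamma (((n:ℝ)+1/2)+k)) := by
  have himg : (fun t => a * Real.sqrt t) '' Set.Ioo 0 1 = Set.Ioo 0 a := by
    ext x
    constructor
    · rintro ⟨t, ht, rfl⟩
      have h1 : 0 < Real.sqrt t := Real.sqrt_pos.mpr ht.1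
      have h2 : Real.sqrt t < 1 := by
        rw [show (1:ℝ) = Real.sqrt 1 by simp]
        exact Real.sqrt_lt_sqrt ht.1.le ht.2
      exact ⟨by positivity, mul_lt_of_lt_one_right ha h2⟩
    · rintro ⟨h1, h2⟩
      refine ⟨(x/a)^2, ⟨by positivity, ?_⟩, ?_⟩
      · have h3 : x/a < 1 := (div_lt_one ha).mpr h2
        have h4 : 0 < x/a := div_pos h1 ha
        nlinarith
      · show a * Real.sqrt ((x/a)^2) = x
        rw [Real.sqrt_sq (by positivity)]
        field_simp
  have hderiv : ∀ t ∈ Set.Ioo (0:ℝ) 1, HasDerivWithinAt (fun t => a * Real.sqrt t)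
      (a * (1 / (2 * Real.sqrt t))) (Set.Ioo 0 1) t := fun t ht =>
    ((Real.hasDerivAt_sqrt ht.1.ne').const_mul a).hasDerivWithinAt
  have hinj : Set.InjOn (fun t => a * Real.sqrt t) (Set.Ioo 0 1) := by
    intro x hx y hy h
    have h' : Real.sqrt x = Real.sqrt y := mul_left_cancel₀ ha.ne' h
    rw [← Real.sq_sqrt hx.1.le, ← Real.sq_sqrt hy.1.le, h']
  have key := integral_image_eq_integral_abs_deriv_smul measurableSet_Ioo hderiv hinj
      (fun ν => ν^(2*n) * (a^2 - ν^2)^(k-1))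
  rw [himg] at key
  rw [key]
  have hcong : ∀ t ∈ Set.Ioo (0:ℝ) 1,
      |a * (1 / (2 * Real.sqrt t))| •
          ((a * Real.sqrt t)^(2*n) * (a^2 - (a * Real.sqrt t)^2)^(k-1))
        = (a^(2*n) * a^(2*k-1) / 2) * (t ^ (((n:ℝ)+1/2)-1) * (1-t)^(k-1)) := by
    intro t ht
    have hs0 : 0 < Real.sqrt t := Real.sqrt_pos.mpr ht.1
    have hs2 : Real.sqrt t ^ 2 = t := Real.sq_sqrt ht.1.le
    have habs : |a * (1/(2*Real.sqrt t))| = a * (1/(2*Real.sqrt t)) :=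
      abs_of_pos (by positivity)
    have h2 : a^2 - (a*Real.sqrt t)^2 = a^2 * (1-t) := by rw [mul_pow, hs2]; ring
    have h3 : (a^2 * (1-t))^(k-1) = a^(2*(k-1)) * (1-t)^(k-1) := by
      rw [Real.mul_rpow (by positivity) (by linarith [ht.2]),
        show a^2 = a^((2:ℕ):ℝ) by rw [Real.rpow_natCast], ← Real.rpow_mul ha.le]
      norm_num
    have h5 : (a*Real.sqrt t)^(2*n) = a^(2*n) * t^n := by
      simp only [mul_pow, pow_mul, hs2]
    have h6 : t ^ (((n:ℝ)+1/2)-1) = t^n / Real.sqrt t := by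
      rw [show ((n:ℝ)+1/2)-1 = (n:ℝ) + (-(1/2)) by ring, Real.rpow_add ht.1,
        Real.rpow_natCast, Real.rpow_neg ht.1.le, ← Real.sqrt_eq_rpow]
      rfl
    have h7 : a ^ (2*k-1) = a^(2*(k-1)) * a := by
      rw [show 2*k-1 = 2*(k-1)+1 by ring, Real.rpow_add ha, Real.rpow_one]
    rw [smul_eq_mul, habs, h2, h3, h5, h6, h7]
    field_simp
  rw [setIntegral_congr_fun measurableSet_Ioo hcong, integral_const_mul,
    betaReal (by positivity) hk]

lemma powInt {k a : ℝ} (hk : 0 < k) (ha : 0 < a) (m : ℕ) :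
    IntegrableOn (fun ν => ν^m * (a^2 - ν^2)^(k-1)) (Set.Ioo (-a) a) := by
  refine Integrable.mono' ((wInt hk ha).const_mul (a^m)) (((measurable_id.pow_const m).mul wMeas).aestronglyMeasurable) ?_
  filter_upwards [ae_restrict_mem measurableSet_Ioo] with ν hν
  have hw : (0:ℝ) ≤ (a^2 - ν^2)^(k-1) := Real.rpow_nonneg (by nlinarith [hν.1, hν.2]) _
  have habs : |ν| ≤ a := abs_le.mpr ⟨hν.1.le, hν.2.le⟩
  rw [Real.norm_eq_abs, abs_mul, abs_pow, abs_of_nonneg hw]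
  exact mul_le_mul_of_nonneg_right (pow_le_pow_left₀ (abs_nonneg ν) habs m) hw

lemma negImage (c d : ℝ) (g : ℝ → ℝ) :
    ∫ ν in Set.Ioo c d, g (-ν) = ∫ ν in Set.Ioo (-d) (-c), g ν := by
  have hd : ∀ x ∈ Set.Ioo c d, HasDerivWithinAt (fun x : ℝ => -x) (-1) (Set.Ioo c d) x :=
    fun x _ => (hasDerivAt_neg x).hasDerivWithinAt
  have key := integral_image_eq_integral_abs_deriv_smul measurableSet_Ioo hd
    neg_injective.injOn g
  have himg : (fun x : ℝ => -x) '' Set.Ioo c d = Set.Ioo (-d) (-c) := by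
    rw [show (fun x : ℝ => -x) = Neg.neg from rfl, Set.image_neg_eq_neg, Set.neg_Ioo]
  rw [himg] at key
  rw [key]
  simp

lemma oddInt {k a : ℝ} (m : ℕ) :
    ∫ ν in Set.Ioo (-a) a, ν^(2*m+1) * (a^2 - ν^2)^(k-1) = 0 := by
  have h := negImage (-a) a (fun ν => ν^(2*m+1) * (a^2 - ν^2)^(k-1))
  rw [neg_neg] at h
  have h2 : ∀ ν : ℝ, (-ν)^(2*m+1) * (a^2 - (-ν)^2)^(k-1)
      = -(ν^(2*m+1) * (a^2 - ν^2)^(k-1)) := by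
    intro ν
    rw [Odd.neg_pow ⟨m, by ring⟩, neg_sq]
    ring
  simp_rw [h2] at h
  rw [integral_neg] at h
  linarith

lemma evenFull {k a : ℝ} (hk : 0 < k) (ha : 0 < a) (n : ℕ) :
    ∫ ν in Set.Ioo (-a) a, ν^(2*n) * (a^2 - ν^2)^(k-1)
      = 2 * ∫ ν in Set.Ioo 0 a, ν^(2*n) * (a^2 - ν^2)^(k-1) := by
  have hsplit : Set.Ioo (-a) a = Set.Ioc (-a) 0 ∪ Set.Ioo 0 a := by
    ext ν
    constructor
    · rintro ⟨h1, h2⟩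
      rcases le_or_gt ν 0 with h | h
      · exact Or.inl ⟨h1, h⟩
      · exact Or.inr ⟨h, h2⟩
    · rintro (⟨h1, h2⟩ | ⟨h1, h2⟩) <;> constructor <;> linarith
  have hint := powInt hk ha (2*n)
  have hdisj : Disjoint (Set.Ioc (-a) 0) (Set.Ioo 0 a) := by
    rw [Set.disjoint_left]
    rintro ν ⟨_, h2⟩ ⟨h3, _⟩
    linarith
  rw [hsplit, setIntegral_union hdisj measurableSet_Ioo
      (hint.mono_set (by rw [hsplit]; exact Set.subset_union_left))
      (hint.mono_set (by rw [hsplit]; exact Set.subset_union_right)),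
    integral_Ioc_eq_integral_Ioo]
  have h := negImage 0 a (fun ν => ν^(2*n) * (a^2 - ν^2)^(k-1))
  rw [neg_zero] at h
  rw [← h]
  have : ∀ ν : ℝ, (-ν)^(2*n) * (a^2 - (-ν)^2)^(k-1) = ν^(2*n) * (a^2 - ν^2)^(k-1) := by
    intro ν
    rw [Even.neg_pow ⟨n, by ring⟩, neg_sq]
  simp_rw [this]
  ring

lemma seriesInt {k a : ℝ} (b : ℝ) (hk : 0 < k) (ha : 0 < a) :
    ∫ ν in Set.Ioo (-a) a, Real.exp (b*ν) * (a^2-ν^2)^(k-1)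
      = ∑' m : ℕ, b^m / (m.factorial : ℝ)
          * ∫ ν in Set.Ioo (-a) a, ν^m * (a^2-ν^2)^(k-1) := by
  have hFeq : ∀ m : ℕ, (fun ν : ℝ => (b*ν)^m / (m.factorial:ℝ) * (a^2-ν^2)^(k-1))
      = fun ν => b^m/(m.factorial:ℝ) * (ν^m * (a^2-ν^2)^(k-1)) := by
    intro m; funext ν; rw [mul_pow]; ring
  have hF_int : ∀ m : ℕ, Integrable
      (fun ν : ℝ => (b*ν)^m / (m.factorial:ℝ) * (a^2-ν^2)^(k-1))
      (volume.restrict (Set.Ioo (-a) a)) := by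
    intro m; rw [hFeq m]; exact (powInt hk ha m).const_mul _
  have hnorm : ∀ m : ℕ,
      (∫ ν in Set.Ioo (-a) a, ‖(b*ν)^m / (m.factorial:ℝ) * (a^2-ν^2)^(k-1)‖)
        ≤ ((|b| * a)^m/(m.factorial:ℝ)) * ∫ ν in Set.Ioo (-a) a, (a^2-ν^2)^(k-1) := by
    intro m
    rw [← integral_const_mul]
    refine integral_mono_ae (hF_int m).norm (((wInt hk ha).const_mul _)) ?_
    filter_upwards [ae_restrict_mem measurableSet_Ioo] with ν hν
    have hw : (0:ℝ) ≤ (a^2 - ν^2)^(k-1) := Real.rpow_nonneg (by nlinarith [hν.1, hν.2]) _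
    have habs : |ν| ≤ a := abs_le.mpr ⟨hν.1.le, hν.2.le⟩
    have h1 : |b*ν| ^ m ≤ (|b| * a)^m := by
      refine pow_le_pow_left₀ (abs_nonneg _) ?_ m
      rw [abs_mul]
      exact mul_le_mul_of_nonneg_left habs (abs_nonneg b)
    have hfac : (0:ℝ) < (m.factorial : ℝ) := by positivity
    rw [norm_mul, norm_div, Real.norm_eq_abs, Real.norm_eq_abs, Real.norm_eq_abs,
      abs_of_nonneg hw, abs_pow, Nat.abs_cast]
    rw [div_mul_eq_mul_div, div_mul_eq_mul_div, div_le_div_iff_of_pos_right hfac]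
    exact mul_le_mul_of_nonneg_right h1 hw
  have hsum : Summable (fun m : ℕ =>
      ∫ ν in Set.Ioo (-a) a, ‖(b*ν)^m / (m.factorial:ℝ) * (a^2-ν^2)^(k-1)‖) := by
    refine Summable.of_nonneg_of_le
      (fun m => integral_nonneg (fun ν => norm_nonneg _)) hnorm ?_
    exact (Real.summable_pow_div_factorial (|b| * a)).mul_right _
  have key := integral_tsum_of_summable_integral_norm hF_int hsum
  have hexp : ∀ ν : ℝ, Real.exp (b*ν) * (a^2-ν^2)^(k-1)
      = ∑' m : ℕ, (b*ν)^m/(m.factorial:ℝ) * (a^2-ν^2)^(k-1) := by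
    intro ν
    rw [Real.exp_eq_exp_ℝ, NormedSpace.exp_eq_tsum_div, tsum_mul_right]
  simp_rw [hexp]
  rw [← key]
  refine tsum_congr fun m => ?_
  rw [hFeq m, integral_const_mul]

/-- the Dunkl–Bessel function of type `A₁`:
for `k > 0`, `a > 0`, `b ∈ ℝ`,
`(Γ(2k) / (Γ(k)² (2a)^{2k−1})) ∫_{−a}^{a} e^{bν}(a²−ν²)^{k−1} dν
 = Γ(k+1/2) Σ_{n=0}^∞ (ab/2)^{2n} / (n! Γ(n+k+1/2))`. -/
theorem stmt2 (k a b : ℝ) (hk : 0 < k) (ha : 0 < a) :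
    Real.Gamma (2 * k) / (Real.Gamma k ^ 2 * (2 * a) ^ (2 * k - 1)) *
      ∫ ν in Set.Ioo (-a) a, Real.exp (b * ν) * (a ^ 2 - ν ^ 2) ^ (k - 1) =
    Real.Gamma (k + 1 / 2) *
      ∑' n : ℕ, (a * b / 2) ^ (2 * n) / ((n.factorial : ℝ) * Real.Gamma ((n : ℝ) + k + 1 / 2)) := by
  rw [seriesInt b hk ha]
  set I : ℕ → ℝ := fun m => ∫ ν in Set.Ioo (-a) a, ν^m * (a^2-ν^2)^(k-1) with hI
  set g : ℕ → ℝ := fun m => b^m / (m.factorial : ℝ) * I m with hgdef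
  -- summability of g
  have hW0 : (0:ℝ) ≤ ∫ ν in Set.Ioo (-a) a, (a^2-ν^2)^(k-1) :=
    setIntegral_nonneg measurableSet_Ioo fun ν hν => Real.rpow_nonneg (by nlinarith [hν.1, hν.2]) _
  set W : ℝ := ∫ ν in Set.Ioo (-a) a, (a^2-ν^2)^(k-1) with hWdef
  have hIbound : ∀ m : ℕ, |I m| ≤ a^m * W := by
    intro m
    calc |I m| ≤ ∫ ν in Set.Ioo (-a) a, ‖ν^m * (a^2-ν^2)^(k-1)‖ := by
          rw [← Real.norm_eq_abs]; exact norm_integral_le_integral_norm _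
      _ ≤ ∫ ν in Set.Ioo (-a) a, a^m * (a^2-ν^2)^(k-1) := by
          refine integral_mono_ae (powInt hk ha m).norm ((wInt hk ha).const_mul _) ?_
          filter_upwards [ae_restrict_mem measurableSet_Ioo] with ν hν
          have hw : (0:ℝ) ≤ (a^2 - ν^2)^(k-1) :=
            Real.rpow_nonneg (by nlinarith [hν.1, hν.2]) _
          have habs : |ν| ≤ a := abs_le.mpr ⟨hν.1.le, hν.2.le⟩
          rw [norm_mul, Real.norm_eq_abs, Real.norm_eq_abs, abs_of_nonneg hw, abs_pow]
          exact mul_le_mul_of_nonneg_right (pow_le_pow_left₀ (abs_nonneg ν) habs m) hw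
      _ = a^m * W := integral_const_mul _ _
  have hg : Summable g := by
    refine Summable.of_norm_bounded
      (((Real.summable_pow_div_factorial (|b| * a)).mul_right W)) ?_
    intro m
    rw [hgdef]
    simp only [Real.norm_eq_abs, abs_mul, abs_div, abs_pow, Nat.abs_cast]
    have hfac : (0:ℝ) < (m.factorial : ℝ) := by positivity
    calc |b|^m / (m.factorial:ℝ) * |I m| ≤ |b|^m / (m.factorial:ℝ) * (a^m * W) :=
          mul_le_mul_of_nonneg_left (hIbound m) (by positivity)
      _ = (|b| * a)^m / (m.factorial:ℝ) * W := by rw [mul_pow]; ring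
  have heven : Summable (fun n : ℕ => g (2*n)) :=
    hg.comp_injective (fun i j h => by omega)
  have hodd : Summable (fun n : ℕ => g (2*n+1)) :=
    hg.comp_injective (fun i j h => by omega)
  rw [← tsum_even_add_odd heven hodd]
  have hoddzero : (∑' n : ℕ, g (2*n+1)) = 0 := by
    rw [show (fun n : ℕ => g (2*n+1)) = fun _ => (0:ℝ) from funext fun n => by
      rw [hgdef]; simp only; rw [hI]; simp only; rw [oddInt]; ring]
    exact tsum_zero
  rw [hoddzero, add_zero]
  -- even terms
  have hIeven : ∀ n : ℕ, I (2*n) = a^(2*n) * a^(2*k-1) *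
      (Real.Gamma ((n:ℝ)+1/2) * Real.Gamma k / Real.Gamma (((n:ℝ)+1/2)+k)) := by
    intro n
    rw [hI]
    simp only
    rw [evenFull hk ha n, halfInt hk ha n]
    ring
  rw [← tsum_mul_left, ← tsum_mul_left]
  refine tsum_congr fun n => ?_
  rw [hgdef]
  simp only
  rw [hIeven n]
  -- facts
  have hsπ : (0:ℝ) < Real.sqrt π := Real.sqrt_pos.mpr Real.pi_pos
  have hΓk : (0:ℝ) < Real.Gamma k := Real.Gamma_pos_of_pos hk
  have hΓnk : (0:ℝ) < Real.Gamma ((n:ℝ) + k + 1/2) := Real.Gamma_pos_of_pos (by positivity)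
  have hga : Real.Gamma (((n:ℝ)+1/2)+k) = Real.Gamma ((n:ℝ)+k+1/2) := by ring_nf
  have h2a : (2*a)^(2*k-1) = 2^(2*k-1) * a^(2*k-1) := Real.mul_rpow (by norm_num) ha.le
  have hpow2 : (0:ℝ) < (2:ℝ)^(2*k-1) := Real.rpow_pos_of_pos two_pos _
  have hpowa : (0:ℝ) < a^(2*k-1) := Real.rpow_pos_of_pos ha _
  have hdup : Real.Gamma k * Real.Gamma (k+1/2) * 2^(2*k-1)
      = Real.Gamma (2*k) * Real.sqrt π := by
    have h1 := Real.Gamma_mul_Gamma_add_half k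
    have h2 : (2:ℝ)^(1-2*k) * 2^(2*k-1) = 1 := by
      rw [← Real.rpow_add two_pos]
      norm_num
    calc Real.Gamma k * Real.Gamma (k+1/2) * 2^(2*k-1)
        = Real.Gamma (2*k) * 2^(1-2*k) * Real.sqrt π * 2^(2*k-1) := by rw [h1]
      _ = Real.Gamma (2*k) * Real.sqrt π * (2^(1-2*k) * 2^(2*k-1)) := by ring
      _ = Real.Gamma (2*k) * Real.sqrt π := by rw [h2, mul_one]
  have hgam := gammaNatAddHalf n
  have hab : (a*b/2)^(2*n) = a^(2*n) * b^(2*n) / 4^n := by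
    rw [div_pow, mul_pow, show (2:ℝ)^(2*n) = 4^n by rw [pow_mul]; norm_num]
  have hfac1 : (0:ℝ) < ((2*n).factorial : ℝ) := by positivity
  have hfac2 : (0:ℝ) < (n.factorial : ℝ) := by positivity
  have h4n : (0:ℝ) < (4:ℝ)^n := by positivity
  have hΓ2k : Real.Gamma (2*k)
      = Real.Gamma k * Real.Gamma (k+1/2) * 2^(2*k-1) / Real.sqrt π := by
    rw [hdup]
    field_simp
  rw [hga, hgam, hab, h2a, hΓ2k]
  field_simp
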